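/- Let K̂ be a simplicial complex of dimension d−1 on n̂ vertices, with V(K̂) = V ∪ V', K := K̂[V] and K' := K̂[V'] induced subcomplexes such that every face of K̂ is a face of K or of K', and suppose K ⊄ K' and K' ⊄ K. Let K have n vertices and dimension d−1, let K' have n' vertices and dimension d'−1 with d' ≤ d, and suppose K and K' each satisfy the Taylor upper bound. Let t = M̃_{n̂−d}(K̂) − (n̂−d) − 1, and write Ũ(K̂) = (∏_{i=1}^{n̂−d} M̃_i(K̂))/(n̂−d)!. Then: (i) if d' = d and |V ∩ V'| ≤ d + t − 1, then f_{d−1}(K̂) ≤ Ũ(K̂) + |V ∩ V'| − (d + t − 1); (ii) if d' < d, then f_{d−1}(K̂) ≤ Ũ(K̂) − n' + |V ∩ V'|. -/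

import Mathlib

open Finset

/-- A simplicial complex on a finite vertex set: a collection of finite subsets
(faces) of the vertex set, closed under inclusion, containing every singleton. -/
structure SC (α : Type*) [DecidableEq α] where
  verts : Finset α
  faces : Finset (Finset α)
  subset_verts : ∀ F ∈ faces, F ⊆ verts
  down_closed : ∀ F ∈ faces, ∀ G, G ⊆ F → G ∈ faces
  singleton_mem : ∀ v ∈ verts, {v} ∈ faces

namespace SC

variable {α : Type*} [DecidableEq α]

/-- `dimP1 K = dim K + 1`: the maximal number of vertices of a face. -/
def dimP1 (K : SC α) : ℕ := K.faces.sup Finset.card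

/-- The number of faces with exactly `j` vertices, i.e. `f_{j-1}(K)`. -/
def fCard (K : SC α) (j : ℕ) : ℕ := (K.faces.filter (fun F => F.card = j)).card

/-- The minimal non-faces of `K`: subsets of the vertex set which are not faces,
all of whose proper subsets are faces. -/
def minNonFaces (K : SC α) : Finset (Finset α) :=
  K.verts.powerset.filter (fun F => F ∉ K.faces ∧ ∀ G ∈ F.powerset, G ≠ F → G ∈ K.faces)

/-- The `i`-th minimal Taylor shift `m̃_i(K)`: the minimal number of vertices covered by
a set of exactly `i` minimal non-faces of `K`. -/
noncomputable def mT (K : SC α) (i : ℕ) : ℕ :=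
  sInf {n | ∃ T ⊆ K.minNonFaces, T.card = i ∧ (T.sup id).card = n}

/-- The `i`-th maximal Taylor shift `M̃_i(K)`: the maximal number of vertices covered by
a set of exactly `i` minimal non-faces of `K`. -/
noncomputable def MT (K : SC α) (i : ℕ) : ℕ :=
  sSup {n | ∃ T ⊆ K.minNonFaces, T.card = i ∧ (T.sup id).card = n}

/-- The conjectured Taylor upper bound `(∏_{i=1}^{n-d} M̃_i(K))/(n-d)!` on `f_{d-1}(K)`. -/
noncomputable def taylorUBval (K : SC α) : ℚ :=
  (∏ i ∈ Finset.Icc 1 (K.verts.card - K.dimP1), (K.MT i : ℚ)) /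
    (Nat.factorial (K.verts.card - K.dimP1))

/-- The conjectured Taylor lower bound `(∏_{i=1}^{n-d} m̃_i(K))/(n-d)!` on `f_{d-1}(K)`. -/
noncomputable def taylorLBval (K : SC α) : ℚ :=
  (∏ i ∈ Finset.Icc 1 (K.verts.card - K.dimP1), (K.mT i : ℚ)) /
    (Nat.factorial (K.verts.card - K.dimP1))

/-- `K` satisfies the Taylor upper bound: `f_{d-1}(K) ≤ (∏_{i=1}^{n-d} M̃_i(K))/(n-d)!`. -/
def TaylorUB (K : SC α) : Prop := (K.fCard K.dimP1 : ℚ) ≤ K.taylorUBval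

/-- `K` satisfies the Taylor lower bound: `f_{d-1}(K) ≥ (∏_{i=1}^{n-d} m̃_i(K))/(n-d)!`. -/
def TaylorLB (K : SC α) : Prop := K.taylorLBval ≤ (K.fCard K.dimP1 : ℚ)

/-- The induced subcomplex `K[W]`: the faces of `K` contained in `W`. -/
def induced (K : SC α) (W : Finset α) : SC α where
  verts := K.verts ∩ W
  faces := K.faces.filter (fun F => F ⊆ W)
  subset_verts := by
    intro F hF
    simp only [mem_filter] at hF
    exact subset_inter (K.subset_verts F hF.1) hF.2
  down_closed := by
    intro F hF G hG
    simp only [mem_filter] at hF ⊢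
    exact ⟨K.down_closed F hF.1 G hG, hG.trans hF.2⟩
  singleton_mem := by
    intro v hv
    simp only [mem_inter] at hv
    simp only [mem_filter, singleton_subset_iff]
    exact ⟨K.singleton_mem v hv.1, hv.2⟩

end SC

namespace SC

variable {α : Type*} [DecidableEq α]

lemma faces_nonempty (K : SC α) (hd : 1 ≤ K.dimP1) : K.faces.Nonempty := by
  rw [Finset.nonempty_iff_ne_empty]
  intro h
  rw [dimP1, h] at hd
  simp at hd

lemma exists_face_card (K : SC α) (hd : 1 ≤ K.dimP1) :
    ∃ F ∈ K.faces, F.card = K.dimP1 := by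
  obtain ⟨F, hF, hFc⟩ := Finset.exists_mem_eq_sup K.faces (K.faces_nonempty hd) Finset.card
  exact ⟨F, hF, hFc.symm⟩

lemma empty_mem_faces (K : SC α) (hd : 1 ≤ K.dimP1) : ∅ ∈ K.faces := by
  obtain ⟨F, hF⟩ := K.faces_nonempty hd
  exact K.down_closed F hF ∅ (Finset.empty_subset F)

lemma card_le_of_mem_faces (K : SC α) {F : Finset α} (hF : F ∈ K.faces) :
    F.card ≤ K.dimP1 := Finset.le_sup hF

lemma mem_minNonFaces (K : SC α) {F : Finset α} :
    F ∈ K.minNonFaces ↔ F ⊆ K.verts ∧ F ∉ K.faces ∧ ∀ G ⊆ F, G ≠ F → G ∈ K.faces := by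
  simp [minNonFaces, Finset.mem_filter, Finset.mem_powerset]

lemma two_le_card_of_mem_minNonFaces (K : SC α) (hd : 1 ≤ K.dimP1) {F : Finset α}
    (hF : F ∈ K.minNonFaces) : 2 ≤ F.card := by
  rw [mem_minNonFaces] at hF
  obtain ⟨hFv, hFnf, -⟩ := hF
  by_contra h
  push_neg at h
  have h01 : F.card = 0 ∨ F.card = 1 := by omega
  rcases h01 with h0 | h1
  · exact hFnf (Finset.card_eq_zero.mp h0 ▸ K.empty_mem_faces hd)
  · obtain ⟨v, rfl⟩ := Finset.card_eq_one.mp h1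
    exact hFnf (K.singleton_mem v (hFv (Finset.mem_singleton_self v)))

lemma exists_mnf_subset (K : SC α) : ∀ G : Finset α, G ⊆ K.verts → G ∉ K.faces →
    ∃ F ∈ K.minNonFaces, F ⊆ G := by
  intro G
  induction G using Finset.strongInduction with
  | _ G ih =>
    intro hGv hG
    by_cases h : ∀ H ⊆ G, H ≠ G → H ∈ K.faces
    · exact ⟨G, K.mem_minNonFaces.mpr ⟨hGv, hG, h⟩, subset_rfl⟩
    · push_neg at h
      obtain ⟨H, hHG, hne, hHnf⟩ := h
      obtain ⟨F, hF, hFH⟩ := ih H (Finset.ssubset_iff_subset_ne.mpr ⟨hHG, hne⟩)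
        (hHG.trans hGv) hHnf
      exact ⟨F, hF, hFH.trans hHG⟩

lemma exists_big_T (K : SC α) (hd : 1 ≤ K.dimP1) (i : ℕ) (hi1 : 1 ≤ i)
    (hi : i ≤ K.verts.card - K.dimP1) :
    ∃ T ⊆ K.minNonFaces, T.card = i ∧ i + 1 ≤ (T.sup id).card := by
  classical
  obtain ⟨F, hF, hFc⟩ := K.exists_face_card hd
  have hFv : F ⊆ K.verts := K.subset_verts F hF
  have hsd : i ≤ (K.verts \ F).card := by
    rw [Finset.card_sdiff_of_subset hFv, hFc]; exact hi
  obtain ⟨S, hSsub, hScard⟩ := Finset.exists_subset_card_eq hsd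
  have key : ∀ v ∈ S, ∃ Gv, Gv ∈ K.minNonFaces ∧ Gv ⊆ insert v F ∧ v ∈ Gv := by
    intro v hv
    have hv' := hSsub hv
    rw [Finset.mem_sdiff] at hv'
    have hnf : insert v F ∉ K.faces := by
      intro hmem
      have h1 := K.card_le_of_mem_faces hmem
      rw [Finset.card_insert_of_notMem hv'.2, hFc] at h1
      omega
    obtain ⟨Gv, hGv, hGvsub⟩ := K.exists_mnf_subset (insert v F)
      (Finset.insert_subset hv'.1 hFv) hnf
    refine ⟨Gv, hGv, hGvsub, ?_⟩
    by_contra hvG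
    have hsubF : Gv ⊆ F := by
      intro x hx
      rcases Finset.mem_insert.mp (hGvsub hx) with rfl | hxF
      · exact absurd hx hvG
      · exact hxF
    exact ((K.mem_minNonFaces.mp hGv).2.1) (K.down_closed F hF Gv hsubF)
  choose! g hg1 hg2 hg3 using key
  have hinj : Set.InjOn g S := by
    intro v hv w hw hgvw
    have hwmem : w ∈ insert v F := hg2 v hv (hgvw ▸ hg3 w hw)
    have hwS := hSsub hw
    rw [Finset.mem_sdiff] at hwS
    rcases Finset.mem_insert.mp hwmem with rfl | hxF
    · rfl
    · exact absurd hxF hwS.2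
  refine ⟨S.image g, ?_, ?_, ?_⟩
  · intro T hT
    obtain ⟨v, hv, rfl⟩ := Finset.mem_image.mp hT
    exact hg1 v hv
  · rw [Finset.card_image_of_injOn hinj, hScard]
  · have hSU : S ⊆ (S.image g).sup id := by
      intro v hv
      exact Finset.mem_sup.mpr ⟨g v, Finset.mem_image_of_mem g hv, hg3 v hv⟩
    obtain ⟨v0, hv0⟩ := Finset.card_pos.mp (by omega : 0 < S.card)
    have h2c : 2 ≤ (g v0).card := K.two_le_card_of_mem_minNonFaces hd (hg1 v0 hv0)
    obtain ⟨x, hx, hxne⟩ := Finset.exists_mem_ne (show 1 < (g v0).card by omega) v0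
    have hxF : x ∈ F := by
      rcases Finset.mem_insert.mp (hg2 v0 hv0 hx) with rfl | h
      · exact absurd rfl hxne
      · exact h
    have hxU : x ∈ (S.image g).sup id :=
      Finset.mem_sup.mpr ⟨g v0, Finset.mem_image_of_mem g hv0, hx⟩
    have hxS : x ∉ S := by
      intro hxS
      have := hSsub hxS
      rw [Finset.mem_sdiff] at this
      exact this.2 hxF
    have hins : insert x S ⊆ (S.image g).sup id := Finset.insert_subset hxU hSU
    calc i + 1 = (insert x S).card := by rw [Finset.card_insert_of_notMem hxS, hScard]
      _ ≤ ((S.image g).sup id).card := Finset.card_le_card hins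

lemma bddAbove_MTset (K : SC α) (i : ℕ) :
    BddAbove {n | ∃ T ⊆ K.minNonFaces, T.card = i ∧ (T.sup id).card = n} := by
  refine ⟨K.verts.card, ?_⟩
  rintro n ⟨T, hT, -, rfl⟩
  apply Finset.card_le_card
  show T.sup id ≤ K.verts
  apply Finset.sup_le
  intro F hF
  exact (K.mem_minNonFaces.mp (hT hF)).1

lemma le_MT (K : SC α) (hd : 1 ≤ K.dimP1) (i : ℕ) (hi1 : 1 ≤ i)
    (hi : i ≤ K.verts.card - K.dimP1) : i + 1 ≤ K.MT i := by
  obtain ⟨T, hT, hTc, hTs⟩ := K.exists_big_T hd i hi1 hi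
  calc i + 1 ≤ (T.sup id).card := hTs
    _ ≤ K.MT i := le_csSup (K.bddAbove_MTset i) ⟨T, hT, hTc, rfl⟩

lemma MT_le_MT {K K' : SC α} (h : K.minNonFaces ⊆ K'.minNonFaces) (i : ℕ)
    (hne : {n | ∃ T ⊆ K.minNonFaces, T.card = i ∧ (T.sup id).card = n}.Nonempty) :
    K.MT i ≤ K'.MT i := by
  apply csSup_le_csSup (K'.bddAbove_MTset i) hne
  rintro n ⟨T, hT, hTc, rfl⟩
  exact ⟨T, fun x hx => h (hT hx), hTc, rfl⟩

lemma minNonFaces_induced_subset (K : SC α) (W : Finset α) :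
    (K.induced W).minNonFaces ⊆ K.minNonFaces := by
  intro F hF
  rw [mem_minNonFaces] at hF
  rw [mem_minNonFaces]
  obtain ⟨hFv, hFnf, hmin⟩ := hF
  have hFW : F ⊆ W := by
    intro x hx
    exact (Finset.mem_inter.mp (hFv hx)).2
  refine ⟨fun x hx => (Finset.mem_inter.mp (hFv hx)).1, ?_, ?_⟩
  · intro h
    apply hFnf
    simp only [induced, Finset.mem_filter]
    exact ⟨h, hFW⟩
  · intro G hG hne
    have := hmin G hG hne
    simp only [induced, Finset.mem_filter] at this
    exact this.1

lemma prod_Ioc_fact (g : ℕ → ℕ) (a b : ℕ) (hab : a ≤ b)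
    (hg : ∀ i ∈ Finset.Ioc a b, i + 1 ≤ g i) :
    Nat.factorial (b+1) ≤ Nat.factorial (a+1) * ∏ i ∈ Finset.Ioc a b, g i := by
  induction b, hab using Nat.le_induction with
  | base => simp
  | succ b hab ih =>
    rw [Finset.prod_Ioc_succ_top (by omega)]
    have h1 := ih (fun i hi => hg i (by simp only [Finset.mem_Ioc] at hi ⊢; omega))
    have h2 : b + 2 ≤ g (b+1) := hg (b+1) (by simp only [Finset.mem_Ioc]; omega)
    calc Nat.factorial (b+1+1) = (b+2) * Nat.factorial (b+1) := Nat.factorial_succ _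
      _ ≤ g (b+1) * (Nat.factorial (a+1) * ∏ i ∈ Finset.Ioc a b, g i) :=
          Nat.mul_le_mul h2 h1
      _ = Nat.factorial (a+1) * ((∏ i ∈ Finset.Ioc a b, g i) * g (b+1)) := by ring

lemma key_prod (m u : ℕ → ℕ) (N Nh t : ℕ) (hNNh : N + 1 ≤ Nh)
    (hmu : ∀ i ∈ Finset.Ioc 0 N, u i ≤ m i)
    (hm1 : ∀ i ∈ Finset.Ioc 0 Nh, i + 1 ≤ m i)
    (hMt : m Nh = Nh + t + 1) :
    (∏ i ∈ Finset.Ioc 0 N, u i) * (Nat.factorial Nh * (Nh + t + 1)) ≤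
      (∏ i ∈ Finset.Ioc 0 Nh, m i) * Nat.factorial (N+1) := by
  obtain ⟨P, rfl⟩ : ∃ P, Nh = P + 1 := ⟨Nh - 1, by omega⟩
  rw [← Finset.prod_Ioc_consecutive m (Nat.zero_le N) (show N ≤ P+1 by omega),
      Finset.prod_Ioc_succ_top (show N ≤ P by omega)]
  have hA : (∏ i ∈ Finset.Ioc 0 N, u i) ≤ ∏ i ∈ Finset.Ioc 0 N, m i :=
    Finset.prod_le_prod (fun i _ => Nat.zero_le _) hmu
  have hB : Nat.factorial (P+1) ≤ Nat.factorial (N+1) * ∏ i ∈ Finset.Ioc N P, m i :=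
    prod_Ioc_fact m N P (by omega)
      (fun i hi => hm1 i (by simp only [Finset.mem_Ioc] at hi ⊢; omega))
  rw [← hMt]
  calc (∏ i ∈ Finset.Ioc 0 N, u i) * (Nat.factorial (P+1) * m (P+1))
      = ((∏ i ∈ Finset.Ioc 0 N, u i) * Nat.factorial (P+1)) * m (P+1) := by ring
    _ ≤ ((∏ i ∈ Finset.Ioc 0 N, m i) * (Nat.factorial (N+1) * ∏ i ∈ Finset.Ioc N P, m i))
          * m (P+1) := Nat.mul_le_mul (Nat.mul_le_mul hA hB) le_rfl
    _ = (∏ i ∈ Finset.Ioc 0 N, m i) * ((∏ i ∈ Finset.Ioc N P, m i) * m (P+1))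
          * Nat.factorial (N+1) := by ring

end SC

set_option maxHeartbeats 2000000 in
open SC in
/-- Quantitative version of the union theorem: with `K = K̂[V]` of dimension `d-1` on `n`
vertices and `K' = K̂[V']` of dimension `d'-1 ≤ d-1` on `n'` vertices, neither contained
in the other, both satisfying the Taylor upper bound, and
`t = M̃_{n̂-d}(K̂) - (n̂-d) - 1`:
(i) if `d' = d` and `|V ∩ V'| ≤ d + t - 1` then
`f_{d-1}(K̂) ≤ Ũ(K̂) + |V ∩ V'| - (d + t - 1)`;
(ii) if `d' < d` then `f_{d-1}(K̂) ≤ Ũ(K̂) - n' + |V ∩ V'|`. -/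
theorem taylorUB_union_strong {α : Type*} [DecidableEq α] (Khat : SC α) (V V' : Finset α)
    (d d' n n' : ℕ) (hd : 1 ≤ d) (hd' : 1 ≤ d') (hdd : d' ≤ d)
    (hdim : Khat.dimP1 = d)
    (hV : Khat.verts = V ∪ V')
    (hcover : ∀ F ∈ Khat.faces, F ⊆ V ∨ F ⊆ V')
    (hnsub : ¬ (Khat.induced V).faces ⊆ (Khat.induced V').faces)
    (hnsub' : ¬ (Khat.induced V').faces ⊆ (Khat.induced V).faces)
    (hn : V.card = n) (hn' : V'.card = n')
    (hdimK : (Khat.induced V).dimP1 = d) (hdimK' : (Khat.induced V').dimP1 = d')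
    (hK : TaylorUB (Khat.induced V)) (hK' : TaylorUB (Khat.induced V'))
    (t : ℕ)
    (ht : Khat.MT (Khat.verts.card - d) = (Khat.verts.card - d) + t + 1) :
    (d' = d → (V ∩ V').card ≤ d + t - 1 →
      (Khat.fCard d : ℚ) ≤ Khat.taylorUBval + ((V ∩ V').card : ℚ) - ((d : ℚ) + t - 1)) ∧
    (d' < d →
      (Khat.fCard d : ℚ) ≤ Khat.taylorUBval - (n' : ℚ) + ((V ∩ V').card : ℚ)) := by
  classical
  have hIO : ∀ k : ℕ, Finset.Ioc 0 k = Finset.Icc 1 k := by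
    intro k; ext x; simp only [Finset.mem_Ioc, Finset.mem_Icc]; omega
  have hKfaces : ∀ F, F ∈ (Khat.induced V).faces ↔ F ∈ Khat.faces ∧ F ⊆ V := by
    intro F; simp [SC.induced, Finset.mem_filter]
  have hK'faces : ∀ F, F ∈ (Khat.induced V').faces ↔ F ∈ Khat.faces ∧ F ⊆ V' := by
    intro F; simp [SC.induced, Finset.mem_filter]
  have hvK : (Khat.induced V).verts = V := by
    simp only [SC.induced, hV]; exact Finset.union_inter_cancel_left
  have hvK' : (Khat.induced V').verts = V' := by
    simp only [SC.induced, hV]; exact Finset.union_inter_cancel_right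
  -- basic numerics
  have hdn : d ≤ n := by
    obtain ⟨F, hF, hFc⟩ := (Khat.induced V).exists_face_card (by rw [hdimK]; exact hd)
    have h1 := Finset.card_le_card ((Khat.induced V).subset_verts F hF)
    rw [hvK, hn, hFc, hdimK] at h1
    exact h1
  have hd'n' : d' ≤ n' := by
    obtain ⟨F, hF, hFc⟩ := (Khat.induced V').exists_face_card (by rw [hdimK']; exact hd')
    have h1 := Finset.card_le_card ((Khat.induced V').subset_verts F hF)
    rw [hvK', hn', hFc, hdimK'] at h1
    exact h1
  have hsubV : V ⊆ Khat.verts := by rw [hV]; exact Finset.subset_union_left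
  have hsubV' : V' ⊆ Khat.verts := by rw [hV]; exact Finset.subset_union_right
  have hy : ∃ y, y ∈ V' ∧ y ∉ V := by
    rw [Finset.not_subset] at hnsub'
    obtain ⟨F, hF, hFn⟩ := hnsub'
    rw [hK'faces] at hF
    have h1 : ¬ F ⊆ V := fun h => hFn ((hKfaces F).mpr ⟨hF.1, h⟩)
    rw [Finset.not_subset] at h1
    obtain ⟨y, hyF, hyV⟩ := h1
    exact ⟨y, hF.2 hyF, hyV⟩
  have hx : ∃ x, x ∈ V ∧ x ∉ V' := by
    rw [Finset.not_subset] at hnsub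
    obtain ⟨F, hF, hFn⟩ := hnsub
    rw [hKfaces] at hF
    have h1 : ¬ F ⊆ V' := fun h => hFn ((hK'faces F).mpr ⟨hF.1, h⟩)
    rw [Finset.not_subset] at h1
    obtain ⟨y, hyF, hyV⟩ := h1
    exact ⟨y, hF.2 hyF, hyV⟩
  have hnlt : n + 1 ≤ Khat.verts.card := by
    obtain ⟨y, hyV', hyV⟩ := hy
    have hss : V ⊂ Khat.verts :=
      ⟨hsubV, fun h => hyV (h (by rw [hV]; exact Finset.mem_union_right _ hyV'))⟩
    have := Finset.card_lt_card hss
    omega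
  have hn'lt : n' + 1 ≤ Khat.verts.card := by
    obtain ⟨x, hxV, hxV'⟩ := hx
    have hss : V' ⊂ Khat.verts :=
      ⟨hsubV', fun h => hxV' (h (by rw [hV]; exact Finset.mem_union_left _ hxV))⟩
    have := Finset.card_lt_card hss
    omega
  have hcun : Khat.verts.card + (V ∩ V').card = n + n' := by
    rw [hV, ← hn, ← hn']; exact Finset.card_union_add_card_inter V V'
  have hcn' : (V ∩ V').card ≤ n' := by
    rw [← hn']; exact Finset.card_le_card Finset.inter_subset_right
  -- MT facts
  have hm1 : ∀ i ∈ Finset.Ioc 0 (Khat.verts.card - d), i + 1 ≤ Khat.MT i := by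
    intro i hi
    rw [Finset.mem_Ioc] at hi
    exact Khat.le_MT (by rw [hdim]; exact hd) i hi.1 (by rw [hdim]; exact hi.2)
  have hmuK : ∀ i ∈ Finset.Ioc 0 (n - d), (Khat.induced V).MT i ≤ Khat.MT i := by
    intro i hi
    rw [Finset.mem_Ioc] at hi
    obtain ⟨T, hT, hTc, -⟩ := (Khat.induced V).exists_big_T (by rw [hdimK]; exact hd) i hi.1
      (by rw [hdimK, hvK, hn]; exact hi.2)
    exact MT_le_MT (Khat.minNonFaces_induced_subset V) i ⟨(T.sup id).card, T, hT, hTc, rfl⟩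
  have keyK := key_prod Khat.MT (Khat.induced V).MT (n - d) (Khat.verts.card - d) t
    (by omega) hmuK hm1 ht
  have keyH := key_prod Khat.MT Khat.MT 0 (Khat.verts.card - d) t (by omega)
    (fun i _ => le_rfl) hm1 ht
  simp only [Finset.Ioc_self, Finset.prod_empty, one_mul, Nat.factorial_one, mul_one,
    Nat.zero_add] at keyH
  -- Rational reformulations
  have hfactne : ∀ k : ℕ, ((Nat.factorial k : ℚ)) ≠ 0 :=
    fun k => Nat.cast_ne_zero.mpr (Nat.factorial_ne_zero k)
  have hPH : ((∏ i ∈ Finset.Ioc 0 (Khat.verts.card - d), Khat.MT i : ℕ) : ℚ)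
      = Khat.taylorUBval * (Nat.factorial (Khat.verts.card - d) : ℚ) := by
    rw [SC.taylorUBval, hdim, div_mul_cancel₀ _ (hfactne _), hIO, Nat.cast_prod]
  have hPK : ((∏ i ∈ Finset.Ioc 0 (n - d), (Khat.induced V).MT i : ℕ) : ℚ)
      = (Khat.induced V).taylorUBval * (Nat.factorial (n - d) : ℚ) := by
    rw [SC.taylorUBval, hdimK, hvK, hn, div_mul_cancel₀ _ (hfactne _), hIO, Nat.cast_prod]
  have Q1 : (((Khat.verts.card - d) + t + 1 : ℕ) : ℚ) ≤ Khat.taylorUBval := by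
    have hc : ((Nat.factorial (Khat.verts.card - d) : ℚ) *
        (((Khat.verts.card - d) + t + 1 : ℕ) : ℚ))
        ≤ ((∏ i ∈ Finset.Ioc 0 (Khat.verts.card - d), Khat.MT i : ℕ) : ℚ) := by
      exact_mod_cast keyH
    rw [hPH] at hc
    have hfp : (0:ℚ) < (Nat.factorial (Khat.verts.card - d) : ℚ) := by positivity
    nlinarith [hc, hfp]
  have Q2 : (Khat.induced V).taylorUBval * (((Khat.verts.card - d) + t + 1 : ℕ) : ℚ)
      ≤ Khat.taylorUBval * (((n - d : ℕ) : ℚ) + 1) := by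
    have hc : ((∏ i ∈ Finset.Ioc 0 (n - d), (Khat.induced V).MT i : ℕ) : ℚ) *
        ((Nat.factorial (Khat.verts.card - d) : ℚ) *
          (((Khat.verts.card - d) + t + 1 : ℕ) : ℚ))
        ≤ ((∏ i ∈ Finset.Ioc 0 (Khat.verts.card - d), Khat.MT i : ℕ) : ℚ) *
          (Nat.factorial (n - d + 1) : ℚ) := by exact_mod_cast keyK
    rw [hPK, hPH] at hc
    have hposQ : (0:ℚ) < (Nat.factorial (n - d) : ℚ) *
        (Nat.factorial (Khat.verts.card - d) : ℚ) := by positivity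
    refine le_of_mul_le_mul_right ?_ hposQ
    calc (Khat.induced V).taylorUBval * (((Khat.verts.card - d) + t + 1 : ℕ) : ℚ) *
          ((Nat.factorial (n - d) : ℚ) * (Nat.factorial (Khat.verts.card - d) : ℚ))
        = (Khat.induced V).taylorUBval * (Nat.factorial (n - d) : ℚ) *
          ((Nat.factorial (Khat.verts.card - d) : ℚ) *
            (((Khat.verts.card - d) + t + 1 : ℕ) : ℚ)) := by ring
      _ ≤ Khat.taylorUBval * (Nat.factorial (Khat.verts.card - d) : ℚ) *
            (Nat.factorial (n - d + 1) : ℚ) := hc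
      _ = Khat.taylorUBval * (((n - d : ℕ) : ℚ) + 1) *
            ((Nat.factorial (n - d) : ℚ) * (Nat.factorial (Khat.verts.card - d) : ℚ)) := by
          rw [Nat.factorial_succ]; push_cast; ring
  have hMone : (1:ℚ) ≤ (((Khat.verts.card - d) + t + 1 : ℕ) : ℚ) := by
    exact_mod_cast Nat.one_le_iff_ne_zero.mpr (by omega)
  constructor
  · -- case d' = d
    intro hd'd hcle
    subst hd'd
    -- MT facts for K'
    have hmuK' : ∀ i ∈ Finset.Ioc 0 (n' - d'),
        (Khat.induced V').MT i ≤ Khat.MT i := by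
      intro i hi
      rw [Finset.mem_Ioc] at hi
      obtain ⟨T, hT, hTc, -⟩ := (Khat.induced V').exists_big_T (by rw [hdimK']; exact hd') i hi.1
        (by rw [hdimK', hvK', hn']; exact hi.2)
      exact MT_le_MT (Khat.minNonFaces_induced_subset V') i ⟨(T.sup id).card, T, hT, hTc, rfl⟩
    have keyK' := key_prod Khat.MT (Khat.induced V').MT (n' - d') (Khat.verts.card - d') t
      (by omega) hmuK' hm1 ht
    have hPK' : ((∏ i ∈ Finset.Ioc 0 (n' - d'), (Khat.induced V').MT i : ℕ) : ℚ)
        = (Khat.induced V').taylorUBval * (Nat.factorial (n' - d') : ℚ) := by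
      rw [SC.taylorUBval, hdimK', hvK', hn', div_mul_cancel₀ _ (hfactne _), hIO, Nat.cast_prod]
    have Q3 : (Khat.induced V').taylorUBval * (((Khat.verts.card - d') + t + 1 : ℕ) : ℚ)
        ≤ Khat.taylorUBval * (((n' - d' : ℕ) : ℚ) + 1) := by
      have hc : ((∏ i ∈ Finset.Ioc 0 (n' - d'), (Khat.induced V').MT i : ℕ) : ℚ) *
          ((Nat.factorial (Khat.verts.card - d') : ℚ) *
            (((Khat.verts.card - d') + t + 1 : ℕ) : ℚ))
          ≤ ((∏ i ∈ Finset.Ioc 0 (Khat.verts.card - d'), Khat.MT i : ℕ) : ℚ) *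
            (Nat.factorial (n' - d' + 1) : ℚ) := by exact_mod_cast keyK'
      rw [hPK', hPH] at hc
      have hposQ : (0:ℚ) < (Nat.factorial (n' - d') : ℚ) *
          (Nat.factorial (Khat.verts.card - d') : ℚ) := by positivity
      refine le_of_mul_le_mul_right ?_ hposQ
      calc (Khat.induced V').taylorUBval * (((Khat.verts.card - d') + t + 1 : ℕ) : ℚ) *
            ((Nat.factorial (n' - d') : ℚ) * (Nat.factorial (Khat.verts.card - d') : ℚ))
          = (Khat.induced V').taylorUBval * (Nat.factorial (n' - d') : ℚ) *
            ((Nat.factorial (Khat.verts.card - d') : ℚ) *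
              (((Khat.verts.card - d') + t + 1 : ℕ) : ℚ)) := by ring
        _ ≤ Khat.taylorUBval * (Nat.factorial (Khat.verts.card - d') : ℚ) *
              (Nat.factorial (n' - d' + 1) : ℚ) := hc
        _ = Khat.taylorUBval * (((n' - d' : ℕ) : ℚ) + 1) *
              ((Nat.factorial (n' - d') : ℚ) * (Nat.factorial (Khat.verts.card - d') : ℚ)) := by
            rw [Nat.factorial_succ]; push_cast; ring
    -- face count
    have hfsub : Khat.faces.filter (fun F => F.card = d') ⊆
        (Khat.induced V).faces.filter (fun F => F.card = d') ∪
          (Khat.induced V').faces.filter (fun F => F.card = d') := by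
      intro F hF
      rw [Finset.mem_filter] at hF
      rcases hcover F hF.1 with h | h
      · exact Finset.mem_union_left _ (Finset.mem_filter.mpr ⟨(hKfaces F).mpr ⟨hF.1, h⟩, hF.2⟩)
      · exact Finset.mem_union_right _ (Finset.mem_filter.mpr ⟨(hK'faces F).mpr ⟨hF.1, h⟩, hF.2⟩)
    have hfle : Khat.fCard d' ≤ (Khat.induced V).fCard d' + (Khat.induced V').fCard d' := by
      calc Khat.fCard d' ≤ ((Khat.induced V).faces.filter (fun F => F.card = d') ∪
          (Khat.induced V').faces.filter (fun F => F.card = d')).card :=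
            Finset.card_le_card hfsub
        _ ≤ _ := Finset.card_union_le _ _
    unfold SC.TaylorUB at hK hK'
    rw [hdimK] at hK
    rw [hdimK'] at hK'
    have hf : (Khat.fCard d' : ℚ) ≤ (Khat.induced V).taylorUBval +
        (Khat.induced V').taylorUBval := by
      have := hfle
      have hcast : (Khat.fCard d' : ℚ) ≤ ((Khat.induced V).fCard d' : ℚ) +
          ((Khat.induced V').fCard d' : ℚ) := by exact_mod_cast this
      linarith
    -- arithmetic identities
    have hMid : (Khat.verts.card - d') + t + 1
        = (n - d') + (n' - d') + 2 + (d' + t - 1 - (V ∩ V').card) := by omega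
    have hsc : (d' + t - 1 - (V ∩ V').card) + (V ∩ V').card + 1 = d' + t := by omega
    set s := d' + t - 1 - (V ∩ V').card with hsdef
    set M : ℚ := (((Khat.verts.card - d') + t + 1 : ℕ) : ℚ) with hMdef
    set UK := (Khat.induced V).taylorUBval with hUKdef
    set UK' := (Khat.induced V').taylorUBval with hUK'def
    set UH := Khat.taylorUBval with hUHdef
    have hMc : M = ((n - d' : ℕ) : ℚ) + ((n' - d' : ℕ) : ℚ) + 2 + (s : ℚ) := by
      rw [hMdef]; exact_mod_cast hMid
    have hscQ : ((d' : ℚ) + t - 1) = (s : ℚ) + ((V ∩ V').card : ℚ) := by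
      have : ((s + (V ∩ V').card + 1 : ℕ) : ℚ) = ((d' + t : ℕ) : ℚ) := by exact_mod_cast hsc
      push_cast at this
      linarith
    have hsnn : (0:ℚ) ≤ (s : ℚ) := Nat.cast_nonneg s
    have h2 : (0:ℚ) ≤ (UH - M) * (s : ℚ) := mul_nonneg (by linarith [Q1]) hsnn
    have h3 : (Khat.fCard d' : ℚ) * M ≤ (UK + UK') * M :=
      mul_le_mul_of_nonneg_right hf (by linarith)
    have h4 : (UK + UK') * M ≤ UH * (((n - d' : ℕ) : ℚ) + 1) + UH * (((n' - d' : ℕ) : ℚ) + 1) := by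
      have hexp : (UK + UK') * M = UK * M + UK' * M := by ring
      linarith [Q2, Q3]
    have h5 : UH * (((n - d' : ℕ) : ℚ) + 1) + UH * (((n' - d' : ℕ) : ℚ) + 1)
        = UH * M - UH * (s : ℚ) := by rw [hMc]; ring
    have h6 : (Khat.fCard d' : ℚ) * M ≤ (UH - (s : ℚ)) * M := by nlinarith [h3, h4, h5, h2]
    have h7 : (Khat.fCard d' : ℚ) ≤ UH - (s : ℚ) :=
      le_of_mul_le_mul_right h6 (by linarith)
    linarith [h7, hscQ]
  · -- case d' < d
    intro hlt
    have hfsub2 : Khat.faces.filter (fun F => F.card = d) ⊆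
        (Khat.induced V).faces.filter (fun F => F.card = d) := by
      intro F hF
      rw [Finset.mem_filter] at hF
      rcases hcover F hF.1 with h | h
      · exact Finset.mem_filter.mpr ⟨(hKfaces F).mpr ⟨hF.1, h⟩, hF.2⟩
      · exfalso
        have hmem : F ∈ (Khat.induced V').faces := (hK'faces F).mpr ⟨hF.1, h⟩
        have := (Khat.induced V').card_le_of_mem_faces hmem
        rw [hdimK', hF.2] at this
        omega
    have hfle2 : Khat.fCard d ≤ (Khat.induced V).fCard d := Finset.card_le_card hfsub2
    unfold SC.TaylorUB at hK
    rw [hdimK] at hK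
    have hf : (Khat.fCard d : ℚ) ≤ (Khat.induced V).taylorUBval := by
      have hcast : (Khat.fCard d : ℚ) ≤ ((Khat.induced V).fCard d : ℚ) := by exact_mod_cast hfle2
      linarith
    set B := (n' - (V ∩ V').card) + t with hBdef
    have hMid2 : (Khat.verts.card - d) + t + 1 = (n - d) + 1 + B := by omega
    set M : ℚ := (((Khat.verts.card - d) + t + 1 : ℕ) : ℚ) with hMdef
    set UK := (Khat.induced V).taylorUBval with hUKdef
    set UH := Khat.taylorUBval with hUHdef
    have hMc : M = ((n - d : ℕ) : ℚ) + 1 + (B : ℚ) := by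
      rw [hMdef]; exact_mod_cast hMid2
    have hBQ : (n' : ℚ) - ((V ∩ V').card : ℚ) ≤ (B : ℚ) := by
      have h1 : ((n' - (V ∩ V').card : ℕ) : ℚ) = (n' : ℚ) - ((V ∩ V').card : ℚ) := by
        rw [Nat.cast_sub hcn']
      have h2 : (n' - (V ∩ V').card : ℕ) ≤ B := by omega
      have h3 : ((n' - (V ∩ V').card : ℕ) : ℚ) ≤ (B : ℚ) := by exact_mod_cast h2
      linarith
    have hBnn : (0:ℚ) ≤ (B : ℚ) := Nat.cast_nonneg B
    have h2 : (0:ℚ) ≤ (UH - M) * (B : ℚ) := mul_nonneg (by linarith [Q1]) hBnn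
    have h3 : (Khat.fCard d : ℚ) * M ≤ UK * M :=
      mul_le_mul_of_nonneg_right hf (by linarith [hMone])
    have h5 : UH * (((n - d : ℕ) : ℚ) + 1) = UH * M - UH * (B : ℚ) := by rw [hMc]; ring
    have h6 : (Khat.fCard d : ℚ) * M ≤ (UH - (B : ℚ)) * M := by nlinarith [h3, Q2, h5, h2]
    have h7 : (Khat.fCard d : ℚ) ≤ UH - (B : ℚ) :=
      le_of_mul_le_mul_right h6 (by linarith [hMone])
    linarith [h7, hBQ]
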